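/- For every integer n ≥ 1, every real number s > n, and every ε with 0 < ε < 1, the function f : ℂ^n → ℝ given by f(z) = 1 / ( |ln|z_1| + … + ln|z_n||^s · ∏_{i=1}^n |z_i|^2 ) is integrable (with respect to Lebesgue measure on ℂ^n) on the ball { z ∈ ℂ^n : ‖z‖ < ε }. -/

import Mathlib

open MeasureTheory Set Real

private lemma stepA {q ε : ℝ} (hq : 1 < q) (hε0 : 0 < ε) (hε1 : ε < 1) :
    IntegrableOn (fun r : ℝ => 1 / (r * |Real.log r| ^ q)) (Set.Ioo 0 ε) := by
  set δ := -Real.log ε with hδ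
  have hδ0 : 0 < δ := by
    have := Real.log_neg hε0 hε1
    simp only [hδ]; linarith
  have himg : (fun t : ℝ => Real.exp (-t)) '' Set.Ioi δ = Set.Ioo 0 ε := by
    ext r
    constructor
    · rintro ⟨t, ht, rfl⟩
      refine ⟨Real.exp_pos _, ?_⟩
      have h1 : Real.exp (-t) < Real.exp (-δ) :=
        Real.exp_lt_exp.2 (by have := mem_Ioi.mp ht; linarith)
      rwa [hδ, neg_neg, Real.exp_log hε0] at h1
    · rintro ⟨hr0, hrε⟩
      refine ⟨-Real.log r, ?_, by simp [Real.exp_log hr0]⟩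
      rw [mem_Ioi, hδ]
      exact neg_lt_neg (Real.log_lt_log hr0 hrε)
  have hderiv : ∀ t ∈ Set.Ioi δ, HasDerivWithinAt (fun t : ℝ => Real.exp (-t))
      (-Real.exp (-t)) (Set.Ioi δ) t := by
    intro t _
    have h1 : HasDerivAt (fun t : ℝ => Real.exp (-t)) (Real.exp (-t) * (-1)) t :=
      (Real.hasDerivAt_exp (-t)).comp t ((hasDerivAt_id t).neg)
    simpa using h1.hasDerivWithinAt
  have hinj : Set.InjOn (fun t : ℝ => Real.exp (-t)) (Set.Ioi δ) := by
    intro a _ b _ h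
    have := Real.exp_injective h
    linarith [neg_injective this]
  rw [← himg,
    integrableOn_image_iff_integrableOn_abs_deriv_smul measurableSet_Ioi hderiv hinj]
  apply (integrableOn_Ioi_rpow_of_lt (by linarith : -q < -1) hδ0).congr_fun ?_ measurableSet_Ioi
  intro t ht
  have ht0 : 0 < t := lt_trans hδ0 ht
  have hexp : (0:ℝ) < Real.exp (-t) := Real.exp_pos _
  have htq : (0:ℝ) < t ^ q := Real.rpow_pos_of_pos ht0 _
  simp only [Real.rpow_neg ht0.le]
  simp only [abs_neg, abs_of_pos hexp, smul_eq_mul, Real.log_exp, abs_neg, abs_of_pos ht0]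
  field_simp


private lemma stepB {q ε : ℝ} (hq : 1 < q) (hε0 : 0 < ε) (hε1 : ε < 1) :
    IntegrableOn (fun z : ℂ => 1 / (|Real.log (‖z‖)| ^ q * ‖z‖ ^ 2))
      (Metric.ball 0 ε) := by
  rw [← (Complex.volume_preserving_equiv_real_prod.symm _).integrableOn_comp_preimage
      (MeasurableEquiv.measurableEmbedding _)]
  set e := Complex.measurableEquivRealProd with he
  set G : ℝ × ℝ → ℝ := (fun z : ℂ =>
    1 / (|Real.log (‖z‖)| ^ q * ‖z‖ ^ 2)) ∘ ⇑e.symm with hG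
  set T : Set (ℝ × ℝ) := Set.Ioo 0 ε ×ˢ Set.Ioo (-π) π with hT
  have hTm : MeasurableSet T := measurableSet_Ioo.prod measurableSet_Ioo
  -- derivative data
  set B : ℝ × ℝ → ℝ × ℝ →L[ℝ] ℝ × ℝ := fun p =>
    LinearMap.toContinuousLinearMap (Matrix.toLin (Module.Basis.finTwoProd ℝ) (Module.Basis.finTwoProd ℝ)
      !![Real.cos p.2, -p.1 * Real.sin p.2; Real.sin p.2, p.1 * Real.cos p.2]) with hB
  have hBd : ∀ p ∈ T, HasFDerivWithinAt polarCoord.symm (B p) T p := fun p _ =>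
    (hasFDerivAt_polarCoord_symm p).hasFDerivWithinAt
  have B_det : ∀ p, (B p).det = p.1 := by
    intro p
    conv_rhs => rw [← one_mul p.1, ← Real.cos_sq_add_sin_sq p.2]
    simp only [hB, neg_mul, LinearMap.det_toContinuousLinearMap, LinearMap.det_toLin,
      Matrix.det_fin_two_of, sub_neg_eq_add]
    ring
  have hinj : Set.InjOn polarCoord.symm T := by
    apply polarCoord.symm.injOn.mono
    rw [OpenPartialHomeomorph.symm_source, polarCoord_target]
    exact Set.prod_mono Set.Ioo_subset_Ioi_self (subset_refl _)
  -- abs of polarCoord.symm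
  have habs : ∀ p : ℝ × ℝ, ‖e.symm (polarCoord.symm p)‖ = |p.1| := by
    intro p
    simp only [he, polarCoord_symm_apply, Complex.measurableEquivRealProd_symm_apply]
    rw [Complex.norm_def, Complex.normSq_mk]
    have : p.1 * Real.cos p.2 * (p.1 * Real.cos p.2) + p.1 * Real.sin p.2 * (p.1 * Real.sin p.2)
        = p.1 ^ 2 := by
      have h := Real.sin_sq_add_cos_sq p.2
      nlinarith [h]
    rw [this, Real.sqrt_sq_eq_abs]
  -- integrability on the image
  have hRHS : IntegrableOn (fun p => |(B p).det| • G (polarCoord.symm p)) T := by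
    have hP : IntegrableOn (fun p : ℝ × ℝ => (1 / (p.1 * |Real.log p.1| ^ q)) * 1) T := by
      rw [IntegrableOn, hT, Measure.volume_eq_prod, ← Measure.prod_restrict]
      exact (stepA hq hε0 hε1).mul_prod
        (integrableOn_const measure_Ioo_lt_top.ne)
    apply hP.congr_fun ?_ hTm
    rintro ⟨r, θ⟩ hp
    obtain ⟨hr, hθ⟩ := hp
    have hr0 : 0 < r := hr.1
    have hrabs : ‖e.symm (polarCoord.symm (r, θ))‖ = r := by
      rw [habs]; exact abs_of_pos hr0
    have hlog : Real.log r ≠ 0 := (Real.log_neg hr0 (lt_trans hr.2 hε1)).ne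
    have hlq : (0:ℝ) < |Real.log r| ^ q := Real.rpow_pos_of_pos (abs_pos.2 hlog) _
    simp only [B_det, abs_of_pos hr0, smul_eq_mul, hG, Function.comp_apply, hrabs]
    field_simp
  have himg : IntegrableOn G (polarCoord.symm '' T) :=
    (integrableOn_image_iff_integrableOn_abs_det_fderiv_smul volume hTm hBd hinj G).2 hRHS
  -- null set
  have hnull : volume (polarCoord.sourceᶜ) = 0 := by
    have := polarCoord_source_ae_eq_univ
    rwa [ae_eq_univ] at this
  have hnullInt : IntegrableOn G (polarCoord.sourceᶜ) := by
    rw [IntegrableOn, Measure.restrict_eq_zero.2 hnull]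
    exact integrable_zero_measure
  apply (himg.union hnullInt).mono_set
  -- the preimage of the ball is inside the image union the null set
  intro p hp
  by_cases hsrc : p ∈ polarCoord.source
  · left
    refine ⟨polarCoord p, ?_, polarCoord.left_inv hsrc⟩
    have htgt := polarCoord.map_source hsrc
    rw [polarCoord_target] at htgt
    have habs' : (polarCoord p).1 = ‖e.symm p‖ := by
      simp only [polarCoord_apply, he, Complex.measurableEquivRealProd_symm_apply,
        Complex.norm_def, Complex.normSq_mk]
      ring_nf
    have hlt : (polarCoord p).1 < ε := by
      rw [habs']
      have : e.symm p ∈ Metric.ball (0:ℂ) ε := hp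
      rwa [Metric.mem_ball, dist_zero_right] at this
    exact ⟨⟨htgt.1, hlt⟩, htgt.2⟩
  · right; exact hsrc


/-- Lemma 3.1(ii), convergence: for `s > n`, the function
`z ↦ 1 / (|∑ i, ln |z_i||^s · ∏ i, |z_i|²)` is integrable on a small ball in `ℂⁿ`. -/
theorem stmt_2 (n : ℕ) (hn : 1 ≤ n) (s : ℝ) (hs : (n : ℝ) < s)
    (ε : ℝ) (hε0 : 0 < ε) (hε1 : ε < 1) :
    IntegrableOn
      (fun z : Fin n → ℂ =>
        1 / (|∑ i, Real.log (‖z i‖)| ^ s * ∏ i, ‖z i‖ ^ 2))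
      (Metric.ball 0 ε) := by
  have hn0 : (0:ℝ) < n := by exact_mod_cast Nat.lt_of_lt_of_le Nat.zero_lt_one hn
  have hs0 : (0:ℝ) ≤ s := le_of_lt (lt_of_le_of_lt (le_of_lt hn0) hs)
  set q : ℝ := s / n with hqdef
  have hq : 1 < q := (one_lt_div hn0).2 hs
  set g : ℂ → ℝ := (Metric.ball (0:ℂ) ε).indicator
    (fun z => 1 / (|Real.log (‖z‖)| ^ q * ‖z‖ ^ 2)) with hgdef
  have hg : Integrable g :=
    (integrable_indicator_iff measurableSet_ball).2 (stepB hq hε0 hε1)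
  have hgnonneg : ∀ z, 0 ≤ g z := by
    intro z
    apply Set.indicator_nonneg
    intro z _
    positivity
  have hprod : Integrable (fun x : Fin n → ℂ => ((n:ℝ) ^ s)⁻¹ * ∏ i, g (x i)) :=
    (Integrable.fintype_prod (fun _ => hg)).const_mul _
  -- measurability of the target function
  have hmeas : AEStronglyMeasurable
      (fun z : Fin n → ℂ =>
        1 / (|∑ i, Real.log (‖z i‖)| ^ s * ∏ i, ‖z i‖ ^ 2))
      (volume.restrict (Metric.ball 0 ε)) := by
    apply Measurable.aestronglyMeasurable
    apply Measurable.div measurable_const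
    apply Measurable.mul (M := ℝ)
    · apply ((Real.continuous_rpow_const hs0).measurable).comp
      apply Measurable.abs
      apply Finset.measurable_sum
      intro i _
      exact Real.measurable_log.comp (continuous_norm.measurable.comp
        (measurable_pi_apply i))
    · apply Finset.measurable_prod
      intro i _
      exact ((continuous_norm.comp (continuous_apply i)).pow 2).measurable
  -- the a.e. coordinates are nonzero
  have h0 : ∀ᵐ x : Fin n → ℂ ∂(volume : Measure (Fin n → ℂ)), ∀ i, x i ≠ 0 := by
    rw [MeasureTheory.volume_pi]
    exact ae_all_iff.2 fun i => Measure.ae_eval_ne _ i 0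
  apply Integrable.mono' hprod.restrict hmeas
  filter_upwards [ae_restrict_mem measurableSet_ball, ae_restrict_of_ae h0]
    with x hx hx0
  -- notation
  set L : Fin n → ℝ := fun i => Real.log (‖x i‖) with hL
  have hr : ∀ i, 0 < ‖x i‖ := fun i => (norm_pos_iff.2 (hx0 i))
  have hrε : ∀ i, ‖x i‖ < ε := by
    intro i
    have h1 : ‖x i‖ ≤ ‖x‖ := norm_le_pi_norm x i
    have h2 : ‖x‖ < ε := by rwa [mem_ball_zero_iff] at hx
    calc ‖x i‖ = ‖x i‖ := rfl
    _ ≤ ‖x‖ := h1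
    _ < ε := h2
  have hLneg : ∀ i, L i < 0 := fun i => Real.log_neg (hr i) (lt_trans (hrε i) hε1)
  have htpos : ∀ i, (0:ℝ) < |L i| := fun i => abs_pos.2 (hLneg i).ne
  -- |∑ L| = ∑ |L|
  have h1 : |∑ i, L i| = ∑ i, |L i| := by
    rw [abs_of_nonpos (Finset.sum_nonpos fun i _ => (hLneg i).le)]
    rw [← Finset.sum_neg_distrib]
    exact Finset.sum_congr rfl fun i _ => (abs_of_neg (hLneg i)).symm
  -- AM-GM
  have hw : ∑ _i : Fin n, ((n:ℝ))⁻¹ = 1 := by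
    rw [Finset.sum_const, Finset.card_univ, Fintype.card_fin, nsmul_eq_mul]
    exact mul_inv_cancel₀ hn0.ne'
  have amgm := Real.geom_mean_le_arith_mean_weighted Finset.univ (fun _ => ((n:ℝ))⁻¹)
    (fun i => |L i|) (fun i _ => by positivity) hw (fun i _ => (htpos i).le)
  have amgm2 : ∏ i, |L i| ^ ((n:ℝ))⁻¹ ≤ ((n:ℝ))⁻¹ * ∑ i, |L i| := by
    rw [Finset.mul_sum]
    exact amgm
  have key : ∏ i, |L i| ^ q ≤ (((n:ℝ)) ^ s)⁻¹ * |∑ i, L i| ^ s := by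
    have h2 : (∏ i, |L i| ^ ((n:ℝ))⁻¹) ^ s ≤ (((n:ℝ))⁻¹ * ∑ i, |L i|) ^ s :=
      Real.rpow_le_rpow (Finset.prod_nonneg fun i _ => Real.rpow_nonneg (abs_nonneg _) _)
        amgm2 hs0
    have h3 : (∏ i, |L i| ^ ((n:ℝ))⁻¹) ^ s = ∏ i, |L i| ^ q := by
      rw [← Real.finset_prod_rpow Finset.univ (fun i => |L i| ^ ((n:ℝ))⁻¹)
        (fun i _ => Real.rpow_nonneg (abs_nonneg _) _) s]
      apply Finset.prod_congr rfl
      intro i _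
      rw [← Real.rpow_mul (abs_nonneg _), inv_mul_eq_div, hqdef]
    have h4 : (((n:ℝ))⁻¹ * ∑ i, |L i|) ^ s = (((n:ℝ)) ^ s)⁻¹ * |∑ i, L i| ^ s := by
      rw [Real.mul_rpow (inv_nonneg.2 hn0.le) (Finset.sum_nonneg fun i _ => abs_nonneg _),
        Real.inv_rpow hn0.le, h1]
    rw [← h3, ← h4]
    exact h2
  -- put everything together
  have hxball : ∀ i, x i ∈ Metric.ball (0:ℂ) ε := by
    intro i
    rw [Metric.mem_ball, dist_zero_right]
    exact hrε i
  have hgprod : ∏ i, g (x i) = ((∏ i, |L i| ^ q) * ∏ i, ‖x i‖ ^ 2)⁻¹ := by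
    rw [← Finset.prod_mul_distrib, ← Finset.prod_inv_distrib]
    apply Finset.prod_congr rfl
    intro i _
    rw [hgdef, Set.indicator_of_mem (hxball i)]
    rw [one_div]
  have hns : (0:ℝ) < ((n:ℝ)) ^ s := Real.rpow_pos_of_pos hn0 s
  have hP : (0:ℝ) < ∏ i, ‖x i‖ ^ 2 :=
    Finset.prod_pos fun i _ => pow_pos (hr i) 2
  have hD : (0:ℝ) < ∏ i, |L i| ^ q :=
    Finset.prod_pos fun i _ => Real.rpow_pos_of_pos (htpos i) q
  have hmain : ((n:ℝ)) ^ s * ((∏ i, |L i| ^ q) * ∏ i, ‖x i‖ ^ 2)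
      ≤ |∑ i, L i| ^ s * ∏ i, ‖x i‖ ^ 2 := by
    have step : (∏ i, |L i| ^ q) * ∏ i, ‖x i‖ ^ 2
        ≤ ((((n:ℝ)) ^ s)⁻¹ * |∑ i, L i| ^ s) * ∏ i, ‖x i‖ ^ 2 :=
      mul_le_mul_of_nonneg_right key hP.le
    calc ((n:ℝ)) ^ s * ((∏ i, |L i| ^ q) * ∏ i, ‖x i‖ ^ 2)
        ≤ ((n:ℝ)) ^ s * (((((n:ℝ)) ^ s)⁻¹ * |∑ i, L i| ^ s) * ∏ i, ‖x i‖ ^ 2) :=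
          mul_le_mul_of_nonneg_left step hns.le
      _ = |∑ i, L i| ^ s * ∏ i, ‖x i‖ ^ 2 := by
          field_simp
  rw [Real.norm_eq_abs, abs_of_nonneg (by positivity), hgprod, one_div, ← mul_inv]
  exact inv_anti₀ (by positivity) hmain
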